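/- Let c>0 and for 0<d≤c let μ(d)≥0 be defined by μ²(d) = (∫₀^d y²·√((d²−y²)/(c²−y²)) dy)/(∫₀^d √((d²−y²)/(c²−y²)) dy). Then μ²(c(1−η)) = c²·(1/3 − (1/3)·η·log(8/(η·e²))) + O(η²·log²η) as η→0⁺; that is, there exist constants C>0 and η₀>0 such that |μ²(c(1−η)) − c²/3 + (c²/3)·η·log(8/(η·e²))| ≤ C·η²·(log(1/η))² for all 0<η<η₀. -/

import Mathlib

/-- `μ²(d) = (∫₀^d y²·√((d²−y²)/(c²−y²)) dy)/(∫₀^d √((d²−y²)/(c²−y²)) dy)`. -/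
noncomputable def mu2 (c d : ℝ) : ℝ :=
  (∫ y in (0:ℝ)..d, y^2 * Real.sqrt ((d^2 - y^2) / (c^2 - y^2))) /
    (∫ y in (0:ℝ)..d, Real.sqrt ((d^2 - y^2) / (c^2 - y^2)))

open Real intervalIntegral MeasureTheory Set

lemma ftc1 (k : ℝ) (hk0 : 0 < k) (hk1 : k < 1) :
    ∫ t in (0:ℝ)..k, 1/(1 - t^2) = (Real.log (1+k) - Real.log (1-k))/2 := by
  have h : ∀ t ∈ Set.uIcc (0:ℝ) k, HasDerivAt (fun t => (Real.log (1+t) - Real.log (1-t))/2)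
      (1/(1 - t^2)) t := by
    intro t ht
    rw [Set.uIcc_of_le hk0.le] at ht
    have h1 : (0:ℝ) < 1 + t := by nlinarith [ht.1, ht.2]
    have h2 : (0:ℝ) < 1 - t := by nlinarith [ht.1, ht.2]
    have d1 : HasDerivAt (fun t : ℝ => Real.log (1+t)) (1/(1+t)) t := by
      have := ((hasDerivAt_id t).const_add 1).log h1.ne'
      simpa using this
    have d2 : HasDerivAt (fun t : ℝ => Real.log (1-t)) (-1/(1-t)) t := by
      have := ((hasDerivAt_id t).const_sub 1).log h2.ne'
      simpa using this
    have h3 : (1:ℝ) - t^2 ≠ 0 := by nlinarith [ht.1, ht.2]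
    have := (d1.sub d2).div_const 2
    refine this.congr_deriv ?_
    field_simp
    ring
  rw [integral_eq_sub_of_hasDerivAt h]
  · simp
  · apply ContinuousOn.intervalIntegrable
    apply ContinuousOn.div continuousOn_const
    · fun_prop
    · intro t ht
      rw [Set.uIcc_of_le hk0.le] at ht
      nlinarith [ht.1, ht.2]

lemma ftc2 (k : ℝ) (hk0 : 0 < k) (hk1 : k < 1) :
    ∫ t in (0:ℝ)..k, t/(1 - t^2) = -(Real.log (1-k^2))/2 := by
  have h : ∀ t ∈ Set.uIcc (0:ℝ) k, HasDerivAt (fun t => -(Real.log (1-t^2))/2)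
      (t/(1 - t^2)) t := by
    intro t ht
    rw [Set.uIcc_of_le hk0.le] at ht
    have h2 : (0:ℝ) < 1 - t^2 := by nlinarith [ht.1, ht.2]
    have d0 : HasDerivAt (fun t : ℝ => 1 - t^2) (-(2*t)) t := by
      simpa using ((hasDerivAt_pow 2 t).const_sub 1)
    have := (d0.log h2.ne').neg.div_const 2
    refine this.congr_deriv ?_
    field_simp
  rw [integral_eq_sub_of_hasDerivAt h]
  · simp
  · apply ContinuousOn.intervalIntegrable
    apply ContinuousOn.div (by fun_prop) (by fun_prop)
    intro t ht
    rw [Set.uIcc_of_le hk0.le] at ht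
    nlinarith [ht.1, ht.2]

lemma ftc3 (k : ℝ) (hk0 : 0 < k) (hk1 : k < 1) :
    ∫ t in (0:ℝ)..k, 1/(1 - t) = -Real.log (1-k) := by
  have h : ∀ t ∈ Set.uIcc (0:ℝ) k, HasDerivAt (fun t => -Real.log (1-t))
      (1/(1 - t)) t := by
    intro t ht
    rw [Set.uIcc_of_le hk0.le] at ht
    have h2 : (0:ℝ) < 1 - t := by nlinarith [ht.1, ht.2]
    have := (((hasDerivAt_id t).const_sub 1).log h2.ne').neg
    refine this.congr_deriv ?_
    field_simp
    exact div_self h2.ne'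
  rw [integral_eq_sub_of_hasDerivAt h]
  · simp
  · apply ContinuousOn.intervalIntegrable
    apply ContinuousOn.div continuousOn_const (by fun_prop)
    intro t ht
    rw [Set.uIcc_of_le hk0.le] at ht
    nlinarith [ht.1, ht.2]


lemma ftc4 (k : ℝ) (hk0 : 0 < k) (hk1 : k < 1) :
    ∫ t in (0:ℝ)..k, t * Real.sqrt ((k^2 - t^2)/(1 - t^2))
      = k/2 - ((1-k^2)/4) * Real.log ((1+k)^2/(1-k^2)) := by
  set m : ℝ := 1 - k^2 with hm
  have hm0 : 0 < m := by nlinarith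
  set ψ : ℝ → ℝ := fun t => -(Real.sqrt ((1-t^2)*(k^2-t^2))/2)
      + (m/4) * Real.log ((Real.sqrt (1-t^2) + Real.sqrt (k^2-t^2))^2/m) with hψ
  have key : ∀ x ∈ Set.Icc (0:ℝ) k, 0 < Real.sqrt (1-x^2) + Real.sqrt (k^2-x^2) := by
    intro x hx
    have h1 : (0:ℝ) < 1 - x^2 := by nlinarith [hx.1, hx.2]
    have := Real.sqrt_pos.2 h1
    positivity
  have hcont : ContinuousOn ψ (Set.Icc (0:ℝ) k) := by
    apply ContinuousOn.add
    · fun_prop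
    · apply ContinuousOn.mul continuousOn_const
      apply ContinuousOn.log
      · fun_prop
      · intro x hx
        have := key x hx
        positivity
  have hderiv : ∀ x ∈ Set.Ioo (0:ℝ) k, HasDerivWithinAt ψ
      (x * Real.sqrt ((k^2 - x^2)/(1 - x^2))) (Set.Ioi x) x := by
    intro x hx
    have ha : (0:ℝ) < 1 - x^2 := by nlinarith [hx.1, hx.2]
    have hb : (0:ℝ) < k^2 - x^2 := by nlinarith [hx.1, hx.2]
    have hsa : (0:ℝ) < Real.sqrt (1-x^2) := Real.sqrt_pos.2 ha
    have hsb : (0:ℝ) < Real.sqrt (k^2-x^2) := Real.sqrt_pos.2 hb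
    have da : HasDerivAt (fun t : ℝ => 1 - t^2) (-(2*x)) x := by
      simpa using ((hasDerivAt_pow 2 x).const_sub 1)
    have db : HasDerivAt (fun t : ℝ => k^2 - t^2) (-(2*x)) x := by
      simpa using ((hasDerivAt_pow 2 x).const_sub (k^2))
    have du : HasDerivAt (fun t : ℝ => (1-t^2)*(k^2-t^2))
        (-(2*x)*(k^2-x^2) + (1-x^2)*(-(2*x))) x := da.mul db
    have hu : (0:ℝ) < (1-x^2)*(k^2-x^2) := by positivity
    have dsu : HasDerivAt (fun t : ℝ => Real.sqrt ((1-t^2)*(k^2-t^2)))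
        ((-(2*x)*(k^2-x^2) + (1-x^2)*(-(2*x))) / (2 * Real.sqrt ((1-x^2)*(k^2-x^2)))) x :=
      du.sqrt hu.ne'
    have dsa : HasDerivAt (fun t : ℝ => Real.sqrt (1-t^2)) (-(2*x) / (2*Real.sqrt (1-x^2))) x :=
      da.sqrt ha.ne'
    have dsb : HasDerivAt (fun t : ℝ => Real.sqrt (k^2-t^2)) (-(2*x) / (2*Real.sqrt (k^2-x^2))) x :=
      db.sqrt hb.ne'
    have dv : HasDerivAt (fun t : ℝ => (Real.sqrt (1-t^2) + Real.sqrt (k^2-t^2))^2/m)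
        ((2 * (Real.sqrt (1-x^2) + Real.sqrt (k^2-x^2))^1 *
          (-(2*x) / (2*Real.sqrt (1-x^2)) + -(2*x) / (2*Real.sqrt (k^2-x^2))))/m) x :=
      ((dsa.add dsb).pow 2).div_const m
    have hv : (Real.sqrt (1-x^2) + Real.sqrt (k^2-x^2))^2/m ≠ 0 := by positivity
    have dlog := (dv.log hv).const_mul (m/4)
    have dψ := (dsu.div_const 2).neg.add dlog
    apply HasDerivAt.hasDerivWithinAt
    refine dψ.congr_deriv ?_
    rw [Real.sqrt_div hb.le, Real.sqrt_mul ha.le]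
    have e1 : Real.sqrt (1-x^2) ^ 2 = 1 - x^2 := Real.sq_sqrt ha.le
    have e2 : Real.sqrt (k^2-x^2) ^ 2 = k^2 - x^2 := Real.sq_sqrt hb.le
    set A := Real.sqrt (1-x^2) with hA
    set B := Real.sqrt (k^2-x^2) with hB
    have hsum : 0 < A + B := by positivity
    have hmAB : m = A^2 - B^2 := by rw [e1, e2, hm]; ring
    have hABpos : (0:ℝ) < A^2 - B^2 := by rw [← hmAB]; exact hm0
    rw [e1.symm, e2.symm, hmAB]
    field_simp
    ring
  have hint : IntervalIntegrable (fun t => t * Real.sqrt ((k^2 - t^2)/(1 - t^2)))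
      volume 0 k := by
    apply ContinuousOn.intervalIntegrable
    rw [Set.uIcc_of_le hk0.le]
    apply ContinuousOn.mul (by fun_prop)
    apply Real.continuous_sqrt.comp_continuousOn
    apply ContinuousOn.div (by fun_prop) (by fun_prop)
    intro x hx
    nlinarith [hx.1, hx.2]
  rw [integral_eq_sub_of_hasDeriv_right_of_le hk0.le hcont hderiv hint]
  have hψk : ψ k = 0 := by
    simp only [hψ]
    have h0 : k^2 - k^2 = 0 := by ring
    rw [h0, Real.sqrt_zero, add_zero, mul_zero, Real.sqrt_zero,
      Real.sq_sqrt (by nlinarith : (0:ℝ) ≤ 1 - k^2), ← hm, div_self hm0.ne', Real.log_one]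
    norm_num
  have hψ0 : ψ 0 = -k/2 + (m/4) * Real.log ((1+k)^2/m) := by
    simp only [hψ]
    norm_num
    rw [Real.sqrt_sq hk0.le]
    ring
  rw [hψk, hψ0]
  ring

set_option maxHeartbeats 1000000 in
lemma integrals (k : ℝ) (hk0 : 0 < k) (hk1 : k < 1) :
    ∃ EJ EG : ℝ, 0 ≤ EJ ∧ EJ ≤ ((1-k^2)^2/2)*(-Real.log (1-k)) ∧ 0 ≤ EG ∧
      EG ≤ ((1-k^2)/4)*(Real.log (1+k) - Real.log (1-k)) ∧
      (∫ t in (0:ℝ)..k, Real.sqrt ((k^2-t^2)/(1-t^2)))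
        = 3*k/2 - k^2/2 - ((1-k^2)/4)*(3*Real.log (1+k) - Real.log (1-k)) - EJ ∧
      (∫ t in (0:ℝ)..k, t^2*Real.sqrt ((k^2-t^2)/(1-t^2)))
        = (∫ t in (0:ℝ)..k, Real.sqrt ((k^2-t^2)/(1-t^2)))
          - ((k - k^3/3) - (1-k^2)*k/2 - (1-k^2)*EG) := by
  have hicc : Set.uIcc (0:ℝ) k = Set.Icc 0 k := Set.uIcc_of_le hk0.le
  have hm0 : (0:ℝ) < 1 - k^2 := by nlinarith
  have hfacts : ∀ t ∈ Set.Icc (0:ℝ) k, 0 < 1 - t^2 ∧ 0 ≤ k^2 - t^2 ∧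
      0 < Real.sqrt (1-t^2) ∧ 0 < Real.sqrt (1-t^2) + Real.sqrt (k^2-t^2) := by
    intro t ht
    have h1 : 0 < 1 - t^2 := by nlinarith [ht.1, ht.2]
    have h2 : 0 ≤ k^2 - t^2 := by nlinarith [ht.1, ht.2]
    have h3 : 0 < Real.sqrt (1-t^2) := Real.sqrt_pos.2 h1
    exact ⟨h1, h2, h3, by positivity⟩
  -- continuity
  have cA : ContinuousOn (fun t : ℝ => Real.sqrt (1-t^2)) (Set.Icc 0 k) := by fun_prop
  have cB : ContinuousOn (fun t : ℝ => Real.sqrt (k^2-t^2)) (Set.Icc 0 k) := by fun_prop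
  have cf : ContinuousOn (fun t : ℝ => Real.sqrt ((k^2-t^2)/(1-t^2))) (Set.Icc 0 k) := by
    apply Real.continuous_sqrt.comp_continuousOn
    exact ContinuousOn.div (by fun_prop) (by fun_prop)
      (fun t ht => (hfacts t ht).1.ne')
  have cQ : ContinuousOn (fun t : ℝ =>
      (1-k^2)^2/(2*(1-t^2)*(Real.sqrt (1-t^2)+Real.sqrt (k^2-t^2))^2)) (Set.Icc 0 k) := by
    apply ContinuousOn.div continuousOn_const
    · exact ContinuousOn.mul (by fun_prop) ((cA.add cB).pow 2)
    · intro t ht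
      obtain ⟨u1, u2, u3, u4⟩ := hfacts t ht
      positivity
  have cP : ContinuousOn (fun t : ℝ =>
      Real.sqrt (1-t^2)/(Real.sqrt (1-t^2)+Real.sqrt (k^2-t^2)) - 1/2) (Set.Icc 0 k) := by
    apply ContinuousOn.sub _ continuousOn_const
    exact ContinuousOn.div cA (cA.add cB) (fun t ht => (hfacts t ht).2.2.2.ne')
  have cInv : ContinuousOn (fun t : ℝ => 1/(1-t^2)) (Set.Icc 0 k) :=
    ContinuousOn.div continuousOn_const (by fun_prop) (fun t ht => (hfacts t ht).1.ne')
  have cTdiv : ContinuousOn (fun t : ℝ => t/(1-t^2)) (Set.Icc 0 k) :=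
    ContinuousOn.div (by fun_prop) (by fun_prop) (fun t ht => (hfacts t ht).1.ne')
  -- integrability
  have if' : IntervalIntegrable (fun t : ℝ => Real.sqrt ((k^2-t^2)/(1-t^2))) volume 0 k := by
    apply ContinuousOn.intervalIntegrable; rwa [hicc]
  have ig : IntervalIntegrable (fun t : ℝ => Real.sqrt ((k^2-t^2)*(1-t^2))) volume 0 k := by
    apply ContinuousOn.intervalIntegrable; rw [hicc]; fun_prop
  have iQ : IntervalIntegrable (fun t : ℝ =>
      (1-k^2)^2/(2*(1-t^2)*(Real.sqrt (1-t^2)+Real.sqrt (k^2-t^2))^2)) volume 0 k := by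
    apply ContinuousOn.intervalIntegrable; rwa [hicc]
  have itQ : IntervalIntegrable (fun t : ℝ =>
      t*((1-k^2)^2/(2*(1-t^2)*(Real.sqrt (1-t^2)+Real.sqrt (k^2-t^2))^2))) volume 0 k := by
    apply ContinuousOn.intervalIntegrable; rw [hicc]
    exact (continuous_id.continuousOn).mul cQ
  have i1tQ : IntervalIntegrable (fun t : ℝ =>
      (1-t)*((1-k^2)^2/(2*(1-t^2)*(Real.sqrt (1-t^2)+Real.sqrt (k^2-t^2))^2))) volume 0 k := by
    apply ContinuousOn.intervalIntegrable; rw [hicc]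
    exact (by fun_prop : ContinuousOn (fun t : ℝ => 1-t) _).mul cQ
  have iP : IntervalIntegrable (fun t : ℝ =>
      Real.sqrt (1-t^2)/(Real.sqrt (1-t^2)+Real.sqrt (k^2-t^2)) - 1/2) volume 0 k := by
    apply ContinuousOn.intervalIntegrable; rwa [hicc]
  have iInv : IntervalIntegrable (fun t : ℝ => 1/(1-t^2)) volume 0 k := by
    apply ContinuousOn.intervalIntegrable; rwa [hicc]
  have iTdiv : IntervalIntegrable (fun t : ℝ => t/(1-t^2)) volume 0 k := by
    apply ContinuousOn.intervalIntegrable; rwa [hicc]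
  have itf : IntervalIntegrable (fun t : ℝ => t*Real.sqrt ((k^2-t^2)/(1-t^2))) volume 0 k := by
    apply ContinuousOn.intervalIntegrable; rw [hicc]
    exact (continuous_id.continuousOn).mul cf
  have iid : IntervalIntegrable (fun t : ℝ => t) volume 0 k :=
    continuous_id.intervalIntegrable 0 k
  have iA : IntervalIntegrable (fun t : ℝ => 1-t^2) volume 0 k :=
    (by fun_prop : Continuous (fun t : ℝ => 1-t^2)).intervalIntegrable 0 k
  -- pointwise identities
  have I1 : Set.EqOn (fun t : ℝ => Real.sqrt ((k^2-t^2)/(1-t^2)))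
      (fun t : ℝ => 1 - ((1-k^2)/2)*(1/(1-t^2))
        - (1-k^2)^2/(2*(1-t^2)*(Real.sqrt (1-t^2)+Real.sqrt (k^2-t^2))^2))
      (Set.uIcc 0 k) := by
    intro t ht
    rw [hicc] at ht
    obtain ⟨h1, h2, h3, h4⟩ := hfacts t ht
    simp only
    rw [Real.sqrt_div h2]
    have eA : Real.sqrt (1-t^2)^2 = 1-t^2 := Real.sq_sqrt h1.le
    have eB : Real.sqrt (k^2-t^2)^2 = k^2-t^2 := Real.sq_sqrt h2
    set A := Real.sqrt (1-t^2)
    set B := Real.sqrt (k^2-t^2)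
    have hAB : A^2 - B^2 = 1-k^2 := by rw [eA, eB]; ring
    rw [← eA, ← hAB]
    have hA : A ≠ 0 := by positivity
    have hS : A + B ≠ 0 := h4.ne'
    field_simp
    ring
  have I2 : Set.EqOn (fun t : ℝ =>
      t*((1-k^2)^2/(2*(1-t^2)*(Real.sqrt (1-t^2)+Real.sqrt (k^2-t^2))^2)))
      (fun t : ℝ => t - ((1-k^2)/2)*(t/(1-t^2)) - t*Real.sqrt ((k^2-t^2)/(1-t^2)))
      (Set.uIcc 0 k) := by
    intro t ht
    rw [hicc] at ht
    obtain ⟨h1, h2, h3, h4⟩ := hfacts t ht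
    simp only
    rw [Real.sqrt_div h2]
    have eA : Real.sqrt (1-t^2)^2 = 1-t^2 := Real.sq_sqrt h1.le
    have eB : Real.sqrt (k^2-t^2)^2 = k^2-t^2 := Real.sq_sqrt h2
    set A := Real.sqrt (1-t^2)
    set B := Real.sqrt (k^2-t^2)
    have hAB : A^2 - B^2 = 1-k^2 := by rw [eA, eB]; ring
    rw [← eA, ← hAB]
    have hA : A ≠ 0 := by positivity
    have hS : A + B ≠ 0 := h4.ne'
    field_simp
    ring
  have I3 : Set.EqOn (fun t : ℝ => Real.sqrt ((k^2-t^2)*(1-t^2)))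
      (fun t : ℝ => (1-t^2) - (1-k^2)/2
        - (1-k^2)*(Real.sqrt (1-t^2)/(Real.sqrt (1-t^2)+Real.sqrt (k^2-t^2)) - 1/2))
      (Set.uIcc 0 k) := by
    intro t ht
    rw [hicc] at ht
    obtain ⟨h1, h2, h3, h4⟩ := hfacts t ht
    simp only
    rw [Real.sqrt_mul h2]
    have eA : Real.sqrt (1-t^2)^2 = 1-t^2 := Real.sq_sqrt h1.le
    have eB : Real.sqrt (k^2-t^2)^2 = k^2-t^2 := Real.sq_sqrt h2
    set A := Real.sqrt (1-t^2)
    set B := Real.sqrt (k^2-t^2)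
    have hAB : A^2 - B^2 = 1-k^2 := by rw [eA, eB]; ring
    rw [← eA, ← hAB]
    have hS : A + B ≠ 0 := h4.ne'
    field_simp
    ring
  have I4 : Set.EqOn (fun t : ℝ => t^2*Real.sqrt ((k^2-t^2)/(1-t^2)))
      (fun t : ℝ => Real.sqrt ((k^2-t^2)/(1-t^2)) - Real.sqrt ((k^2-t^2)*(1-t^2)))
      (Set.uIcc 0 k) := by
    intro t ht
    rw [hicc] at ht
    obtain ⟨h1, h2, h3, h4⟩ := hfacts t ht
    simp only
    rw [Real.sqrt_div h2, Real.sqrt_mul h2]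
    have eA : Real.sqrt (1-t^2)^2 = 1-t^2 := Real.sq_sqrt h1.le
    set A := Real.sqrt (1-t^2)
    set B := Real.sqrt (k^2-t^2)
    have hT : t^2 = 1 - A^2 := by rw [eA]; ring
    rw [hT]
    have hA : A ≠ 0 := by positivity
    field_simp
  -- log algebra
  have l1k : (0:ℝ) < 1 - k := by linarith
  have l1k' : (0:ℝ) < 1 + k := by linarith
  have lm : Real.log (1-k^2) = Real.log (1-k) + Real.log (1+k) := by
    rw [show (1:ℝ)-k^2 = (1-k)*(1+k) by ring, Real.log_mul l1k.ne' l1k'.ne']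
  have lq : Real.log ((1+k)^2/(1-k^2)) = Real.log (1+k) - Real.log (1-k) := by
    rw [Real.log_div (by positivity) hm0.ne', Real.log_pow, lm]
    push_cast; ring
  refine ⟨∫ t in (0:ℝ)..k,
      (1-t)*((1-k^2)^2/(2*(1-t^2)*(Real.sqrt (1-t^2)+Real.sqrt (k^2-t^2))^2)),
    ∫ t in (0:ℝ)..k,
      (Real.sqrt (1-t^2)/(Real.sqrt (1-t^2)+Real.sqrt (k^2-t^2)) - 1/2), ?_, ?_, ?_, ?_, ?_, ?_⟩
  · -- 0 ≤ EJ
    apply intervalIntegral.integral_nonneg hk0.le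
    intro t ht
    obtain ⟨h1, h2, h3, h4⟩ := hfacts t ht
    have h5 : (0:ℝ) ≤ 1 - t := by nlinarith [ht.2, hk1]
    positivity
  · -- EJ ≤ ((1-k²)²/2)(−log(1−k))
    have hmono : (∫ t in (0:ℝ)..k,
        (1-t)*((1-k^2)^2/(2*(1-t^2)*(Real.sqrt (1-t^2)+Real.sqrt (k^2-t^2))^2)))
        ≤ ∫ t in (0:ℝ)..k, ((1-k^2)^2/2)*(1/(1-t)) := by
      apply intervalIntegral.integral_mono_on hk0.le i1tQ
      · apply ContinuousOn.intervalIntegrable; rw [hicc]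
        apply ContinuousOn.mul continuousOn_const
        apply ContinuousOn.div continuousOn_const (by fun_prop)
        intro t ht
        have : t ≤ k := ht.2; nlinarith [hk1]
      · intro t ht
        obtain ⟨h1, h2, h3, h4⟩ := hfacts t ht
        have h1t : 0 < 1 - t := by nlinarith [ht.2, hk1]
        have eA : Real.sqrt (1-t^2)^2 = 1-t^2 := Real.sq_sqrt h1.le
        set S := Real.sqrt (1-t^2)+Real.sqrt (k^2-t^2) with hSdef
        have hA2 : (1-t^2) ≤ S^2 := by
          rw [hSdef]
          nlinarith [Real.sqrt_nonneg (k^2-t^2), Real.sqrt_nonneg (1-t^2), eA]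
        have haa : (1-t)^2 ≤ (1-t^2)*S^2 := by
          nlinarith [h1, h1t, ht.1, mul_le_mul_of_nonneg_left hA2 h1.le]
        rw [← sub_nonneg]
        have key : ((1-k^2)^2/2)*(1/(1-t)) - (1-t)*((1-k^2)^2/(2*(1-t^2)*S^2))
            = ((1-k^2)^2/2) * (((1-t^2)*S^2 - (1-t)^2)/((1-t)*((1-t^2)*S^2))) := by
          have hS0 : (0:ℝ) < S := h4
          field_simp
        rw [key]
        apply mul_nonneg (by positivity)
        apply div_nonneg (by linarith) (by positivity)
    calc (∫ t in (0:ℝ)..k,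
        (1-t)*((1-k^2)^2/(2*(1-t^2)*(Real.sqrt (1-t^2)+Real.sqrt (k^2-t^2))^2)))
        ≤ ∫ t in (0:ℝ)..k, ((1-k^2)^2/2)*(1/(1-t)) := hmono
      _ = ((1-k^2)^2/2)*∫ t in (0:ℝ)..k, 1/(1-t) := intervalIntegral.integral_const_mul _ _
      _ = ((1-k^2)^2/2)*(-Real.log (1-k)) := by rw [ftc3 k hk0 hk1]
  · -- 0 ≤ EG
    apply intervalIntegral.integral_nonneg hk0.le
    intro t ht
    obtain ⟨h1, h2, h3, h4⟩ := hfacts t ht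
    have hBA : Real.sqrt (k^2-t^2) ≤ Real.sqrt (1-t^2) :=
      Real.sqrt_le_sqrt (by nlinarith)
    rw [sub_nonneg, le_div_iff₀ h4]
    linarith
  · -- EG ≤ ((1-k²)/4)(L1−L0)
    have hmono : (∫ t in (0:ℝ)..k,
        (Real.sqrt (1-t^2)/(Real.sqrt (1-t^2)+Real.sqrt (k^2-t^2)) - 1/2))
        ≤ ∫ t in (0:ℝ)..k, ((1-k^2)/2)*(1/(1-t^2)) := by
      apply intervalIntegral.integral_mono_on hk0.le iP (iInv.const_mul _)
      intro t ht
      obtain ⟨h1, h2, h3, h4⟩ := hfacts t ht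
      have eA : Real.sqrt (1-t^2)^2 = 1-t^2 := Real.sq_sqrt h1.le
      have eB : Real.sqrt (k^2-t^2)^2 = k^2-t^2 := Real.sq_sqrt h2
      set A := Real.sqrt (1-t^2)
      set B := Real.sqrt (k^2-t^2)
      have hAB : A^2 - B^2 = 1-k^2 := by rw [eA, eB]; ring
      have lhs_eq : A/(A+B) - 1/2 = (1-k^2)/(2*(A+B)^2) := by
        rw [← hAB]
        field_simp
        ring
      rw [lhs_eq]
      have h5 : (1-k^2)/(2*(A+B)^2) ≤ (1-k^2)/(2*(1-t^2)) := by
        apply div_le_div_of_nonneg_left hm0.le (by positivity)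
        nlinarith [Real.sqrt_nonneg (k^2-t^2), eA, h3]
      calc (1-k^2)/(2*(A+B)^2) ≤ (1-k^2)/(2*(1-t^2)) := h5
        _ = ((1-k^2)/2)*(1/(1-t^2)) := by
          field_simp
    calc (∫ t in (0:ℝ)..k,
        (Real.sqrt (1-t^2)/(Real.sqrt (1-t^2)+Real.sqrt (k^2-t^2)) - 1/2))
        ≤ ∫ t in (0:ℝ)..k, ((1-k^2)/2)*(1/(1-t^2)) := hmono
      _ = ((1-k^2)/2)*∫ t in (0:ℝ)..k, 1/(1-t^2) := intervalIntegral.integral_const_mul _ _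
      _ = ((1-k^2)/2)*((Real.log (1+k) - Real.log (1-k))/2) := by rw [ftc1 k hk0 hk1]
      _ = ((1-k^2)/4)*(Real.log (1+k) - Real.log (1-k)) := by ring
  · -- Dexact
    have eD1 : (∫ t in (0:ℝ)..k, Real.sqrt ((k^2-t^2)/(1-t^2)))
        = (∫ t in (0:ℝ)..k, (1 - ((1-k^2)/2)*(1/(1-t^2))))
          - ∫ t in (0:ℝ)..k,
            (1-k^2)^2/(2*(1-t^2)*(Real.sqrt (1-t^2)+Real.sqrt (k^2-t^2))^2) := by
      rw [intervalIntegral.integral_congr I1]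
      exact intervalIntegral.integral_sub
        (intervalIntegrable_const.sub (iInv.const_mul _)) iQ
    have eD2 : (∫ t in (0:ℝ)..k, (1 - ((1-k^2)/2)*(1/(1-t^2))))
        = k - ((1-k^2)/2)*((Real.log (1+k) - Real.log (1-k))/2) := by
      rw [intervalIntegral.integral_sub intervalIntegrable_const (iInv.const_mul _),
        intervalIntegral.integral_const_mul, ftc1 k hk0 hk1, integral_one]
      ring
    have eQsplit : (∫ t in (0:ℝ)..k,
        (1-k^2)^2/(2*(1-t^2)*(Real.sqrt (1-t^2)+Real.sqrt (k^2-t^2))^2))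
        = (∫ t in (0:ℝ)..k,
            t*((1-k^2)^2/(2*(1-t^2)*(Real.sqrt (1-t^2)+Real.sqrt (k^2-t^2))^2)))
          + ∫ t in (0:ℝ)..k,
            (1-t)*((1-k^2)^2/(2*(1-t^2)*(Real.sqrt (1-t^2)+Real.sqrt (k^2-t^2))^2)) := by
      rw [← intervalIntegral.integral_add itQ i1tQ]
      apply intervalIntegral.integral_congr
      intro t _
      simp only
      ring
    have etQ : (∫ t in (0:ℝ)..k,
        t*((1-k^2)^2/(2*(1-t^2)*(Real.sqrt (1-t^2)+Real.sqrt (k^2-t^2))^2)))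
        = (k^2/2 - ((1-k^2)/2)*(-(Real.log (1-k^2))/2))
          - (k/2 - ((1-k^2)/4)*Real.log ((1+k)^2/(1-k^2))) := by
      rw [intervalIntegral.integral_congr I2,
        intervalIntegral.integral_sub (iid.sub (iTdiv.const_mul _)) itf,
        intervalIntegral.integral_sub iid (iTdiv.const_mul _),
        intervalIntegral.integral_const_mul, ftc2 k hk0 hk1, ftc4 k hk0 hk1,
        integral_id]
      ring
    rw [eD1, eD2, eQsplit, etQ, lm, lq]
    ring
  · -- Nexact
    have eN : (∫ t in (0:ℝ)..k, t^2*Real.sqrt ((k^2-t^2)/(1-t^2)))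
        = (∫ t in (0:ℝ)..k, Real.sqrt ((k^2-t^2)/(1-t^2)))
          - ∫ t in (0:ℝ)..k, Real.sqrt ((k^2-t^2)*(1-t^2)) := by
      rw [intervalIntegral.integral_congr I4]
      exact intervalIntegral.integral_sub if' ig
    have eG : (∫ t in (0:ℝ)..k, Real.sqrt ((k^2-t^2)*(1-t^2)))
        = (k - k^3/3) - (1-k^2)*k/2 - (1-k^2)*∫ t in (0:ℝ)..k,
            (Real.sqrt (1-t^2)/(Real.sqrt (1-t^2)+Real.sqrt (k^2-t^2)) - 1/2) := by
      rw [intervalIntegral.integral_congr I3,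
        intervalIntegral.integral_sub (iA.sub intervalIntegrable_const) (iP.const_mul _),
        intervalIntegral.integral_sub iA intervalIntegrable_const,
        intervalIntegral.integral_const_mul]
      have e1 : (∫ t in (0:ℝ)..k, (1-t^2))
          = k - k^3/3 := by
        rw [intervalIntegral.integral_sub intervalIntegrable_const
          ((continuous_pow 2).intervalIntegrable 0 k), integral_one, integral_pow]
        norm_num
      rw [e1, intervalIntegral.integral_const]
      simp
      ring
    rw [eN, eG]

set_option maxHeartbeats 2000000 in
lemma endgame (η EJ EG D G : ℝ) (h0 : 0 < η) (h1 : η < 1/100)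
    (hD : D = 3*(1-η)/2 - (1-η)^2/2 - ((1-(1-η)^2)/4)*(3*Real.log (1+(1-η)) - Real.log η) - EJ)
    (hG : G = (1-η) - (1-η)^3/3 - (1-(1-η)^2)*(1-η)/2 - (1-(1-η)^2)*EG)
    (hJ0 : 0 ≤ EJ) (hJ1 : EJ ≤ ((1-(1-η)^2)^2/2)*(-Real.log η))
    (hG0 : 0 ≤ EG) (hG1 : EG ≤ ((1-(1-η)^2)/4)*(Real.log (1+(1-η)) - Real.log η)) :
    1/2 ≤ D ∧
    |(D - G)/D - (1/3 - (1/3)*η*(Real.log 8 - Real.log η - 2))| ≤ 5*η^2*(Real.log (1/η))^2 := by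
  set ℓ : ℝ := Real.log (1/η) with hℓ
  have hlη : Real.log η = -ℓ := by
    rw [hℓ, one_div, Real.log_inv]; ring
  have hl4 : 4 < ℓ := by
    have h100 : (100:ℝ) < 1/η := by
      rw [lt_div_iff₀ h0]; linarith
    have hA : Real.log 100 < ℓ := by
      rw [hℓ]; exact Real.log_lt_log (by norm_num) h100
    have he : Real.exp 1 < 2.7182818286 := Real.exp_one_lt_d9
    have h4 : Real.exp 4 < 100 := by
      have h41 : Real.exp 4 = (Real.exp 1)^4 := by
        rw [← Real.exp_nat_mul]; norm_num
      have h42 : (Real.exp 1)^4 < (2.7182818286:ℝ)^4 :=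
        pow_lt_pow_left₀ he (Real.exp_pos 1).le (by norm_num)
      have h43 : (2.7182818286:ℝ)^4 < 100 := by norm_num
      linarith
    have : (4:ℝ) < Real.log 100 := by
      calc (4:ℝ) = Real.log (Real.exp 4) := (Real.log_exp 4).symm
        _ < Real.log 100 := Real.log_lt_log (Real.exp_pos 4) h4
    linarith
  have hl0 : 0 < ℓ := by linarith
  have hsq : Real.sqrt η ≤ 1/10 := by
    have : Real.sqrt η ≤ Real.sqrt (1/100) := Real.sqrt_le_sqrt (by linarith)
    rwa [show (1:ℝ)/100 = (1/10)^2 by norm_num,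
      Real.sqrt_sq (by norm_num : (0:ℝ) ≤ 1/10)] at this
  have hsq0 : 0 < Real.sqrt η := Real.sqrt_pos.2 h0
  have hel : η * ℓ ≤ 1/5 := by
    have hs2 : Real.log (Real.sqrt η) = Real.log η / 2 := Real.log_sqrt h0.le
    have h3 := Real.log_le_sub_one_of_pos (show (0:ℝ) < (Real.sqrt η)⁻¹ by positivity)
    rw [Real.log_inv, hs2] at h3
    have hll : ℓ ≤ 2*(Real.sqrt η)⁻¹ := by
      have : ℓ = -Real.log η := by rw [hℓ, one_div, Real.log_inv]
      rw [this]
      have hp : 0 < (Real.sqrt η)⁻¹ := by positivity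
      linarith
    have h4 : η * ℓ ≤ η * (2*(Real.sqrt η)⁻¹) :=
      mul_le_mul_of_nonneg_left hll h0.le
    have h5 : η * (2*(Real.sqrt η)⁻¹) = 2*(η/Real.sqrt η) := by
      rw [div_eq_mul_inv]; ring
    have h6 : η/Real.sqrt η = Real.sqrt η := Real.div_sqrt
    rw [h5, h6] at h4
    linarith
  clear_value ℓ
  have hlog2u : Real.log 2 < 0.6931471808 := Real.log_two_lt_d9
  have hlog2l : 0.6931471803 < Real.log 2 := Real.log_two_gt_d9
  have hlog8 : Real.log 8 = 3 * Real.log 2 := by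
    rw [show (8:ℝ) = 2^3 by norm_num, Real.log_pow]; push_cast; ring
  have h2η : (0:ℝ) < 1 - η/2 := by linarith
  have hlk : Real.log (1+(1-η)) = Real.log 2 + Real.log (1-η/2) := by
    rw [show 1+(1-η) = 2*(1-η/2) by ring, Real.log_mul (by norm_num) h2η.ne']
  set δ : ℝ := Real.log (1-η/2) with hδ
  have hδub : δ ≤ 0 := Real.log_nonpos (by linarith) (by linarith)
  have hδlb : -η ≤ δ := by
    have h := Real.log_le_sub_one_of_pos (show (0:ℝ) < (1-η/2)⁻¹ by positivity)
    rw [Real.log_inv] at h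
    have h7 : (1-η/2)⁻¹ - 1 = (η/2)/(1-η/2) := by
      rw [eq_div_iff h2η.ne', sub_mul, inv_mul_cancel₀ h2η.ne']; ring
    rw [h7] at h
    have : (η/2)/(1-η/2) ≤ η := by
      rw [div_le_iff₀ h2η]; nlinarith
    have : -δ ≤ η := by rw [hδ]; linarith
    linarith
  clear_value δ
  set m : ℝ := 1-(1-η)^2 with hm
  have hm2 : m = 2*η - η^2 := by rw [hm]; ring
  have hm0 : 0 < m := by nlinarith
  have hmle : m ≤ 2*η := by nlinarith
  clear_value m
  have p1 : (0:ℝ) ≤ η^2 := sq_nonneg η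
  -- rewrite D and G
  have hD' : D = (1 - η/2 - (η/2)*(3*Real.log 2 + ℓ)) +
      (-η^2/2 + (3/4)*η^2*Real.log 2 + (η^2/4)*ℓ + (-(3*m/4)*δ) - EJ) := by
    rw [hD, hlk, hlη, hm]; ring
  have hG' : G = (2/3 - η) + (η^2/2 - η^3/6 - m*EG) := by
    rw [hG, hm]; ring
  -- error bounds
  have hEJ : EJ ≤ 2*η^2*ℓ := by
    rw [hlη] at hJ1
    have hm4 : m^2 ≤ 4*η^2 := by
      calc m^2 ≤ (2*η)^2 := pow_le_pow_left₀ hm0.le hmle 2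
        _ = 4*η^2 := by ring
    have hm4l : m^2*ℓ ≤ 4*η^2*ℓ := by
      have := mul_le_mul_of_nonneg_right hm4 hl0.le; linarith
    calc EJ ≤ (m^2/2)*(-(-ℓ)) := hJ1
      _ ≤ 2*η^2*ℓ := by linarith
  have hEG : m*EG ≤ 2*η^2*ℓ := by
    rw [hlη, hlk] at hG1
    have h8 : EG ≤ (m/4)*(Real.log 2 + δ + ℓ) := by
      calc EG ≤ m/4*(Real.log 2 + δ - -ℓ) := hG1
        _ = (m/4)*(Real.log 2 + δ + ℓ) := by ring
    have h9 : Real.log 2 + δ + ℓ ≤ 2*ℓ := by nlinarith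
    have h10 : EG ≤ (m/4)*(2*ℓ) :=
      le_trans h8 (mul_le_mul_of_nonneg_left h9 (by positivity))
    have hm4 : m^2 ≤ 4*η^2 := by
      calc m^2 ≤ (2*η)^2 := pow_le_pow_left₀ hm0.le hmle 2
        _ = 4*η^2 := by ring
    have hm4l : m^2*ℓ ≤ 4*η^2*ℓ := by
      have := mul_le_mul_of_nonneg_right hm4 hl0.le; linarith
    calc m*EG ≤ m*((m/4)*(2*ℓ)) := mul_le_mul_of_nonneg_left h10 hm0.le
      _ ≤ 2*η^2*ℓ := by linarith
  have hmEG0 : 0 ≤ m*EG := mul_nonneg hm0.le hG0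

  clear hD hG hJ1 hG1 hδ hlk hm hsq hsq0 h2η hℓ
  have hl2pos : (0:ℝ) ≤ Real.log 2 := by linarith
  have q0 : (0:ℝ) ≤ η^2*ℓ := mul_nonneg p1 hl0.le
  have q1 : (0:ℝ) ≤ η^3 := by positivity
  have q2 : η^3 ≤ η^2 := by nlinarith
  have q3 : (0:ℝ) ≤ η^2*ℓ^2 := by positivity
  have q4 : η^2*ℓ ≤ 1/500 := by
    have h := mul_le_mul h1.le hel (mul_nonneg h0.le hl0.le) (by norm_num : (0:ℝ) ≤ 1/100)
    nlinarith [h]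
  have q5 : η^2*ℓ*4 ≤ η^2*ℓ*ℓ := mul_le_mul_of_nonneg_left hl4.le q0
  have qel : η*Real.log 2 ≤ (7/10)*η := by
    have := mul_le_mul_of_nonneg_left hlog2u.le h0.le
    nlinarith [this]
  have qel0 : 0 ≤ η*Real.log 2 := mul_nonneg h0.le hl2pos
  have p2 : (3/4)*η^2*Real.log 2 ≤ η^2 := by
    have := mul_le_mul_of_nonneg_left hlog2u.le
      (show (0:ℝ) ≤ (3/4)*η^2 by positivity)
    nlinarith [this]
  have p3 : 0 ≤ (3/4)*η^2*Real.log 2 := by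
    have := mul_nonneg (show (0:ℝ) ≤ (3/4)*η^2 by positivity) hl2pos
    nlinarith [this]
  have p4 : -(3*m/4)*δ ≤ (3/2)*η^2 := by
    have h := mul_le_mul (show 3*m/4 ≤ (3/2)*η by linarith)
      (show -δ ≤ η by linarith) (show 0 ≤ -δ by linarith) (by positivity)
    nlinarith [h]
  have p5 : 0 ≤ -(3*m/4)*δ := by
    have h := mul_nonneg (show (0:ℝ) ≤ 3*m/4 by linarith) (show 0 ≤ -δ by linarith)
    nlinarith [h]
  have p6 : η^2 ≤ (1/4)*(η^2*ℓ) := by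
    have := mul_le_mul_of_nonneg_left hl4.le p1
    nlinarith [this]
  -- |D - D̃| ≤ 3η²ℓ
  have hDdiff : |D - (1 - η/2 - (η/2)*(3*Real.log 2 + ℓ))| ≤ 3*η^2*ℓ := by
    have key : D - (1 - η/2 - (η/2)*(3*Real.log 2 + ℓ)) =
        -η^2/2 + (3/4)*η^2*Real.log 2 + (η^2/4)*ℓ + (-(3*m/4)*δ) - EJ := by
      rw [hD']; ring
    rw [key, abs_le]
    constructor
    · linarith
    · linarith
  have hGdiff : |G - (2/3 - η)| ≤ 3*η^2*ℓ := by
    have key : G - (2/3 - η) = η^2/2 - η^3/6 - m*EG := by rw [hG']; ring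
    rw [key, abs_le]
    constructor
    · linarith
    · linarith
  clear hD' hG' hEJ hmEG0 hEG hδub hδlb hm2 hm0 hmle hJ0 hG0
  -- bounds on the log factors
  have f1 : 0 ≤ 3*Real.log 2 + ℓ - 2 := by linarith
  have f1' : 3*Real.log 2 + ℓ - 2 ≤ 2*ℓ := by linarith
  have f2 : (0:ℝ) ≤ 1+3*Real.log 2+ℓ := by linarith
  have f2' : 1+3*Real.log 2+ℓ ≤ 2*ℓ := by linarith
  have hswb : |((1/3)*η*(3*Real.log 2 + ℓ - 2))*((η/2)*(1+3*Real.log 2+ℓ))| ≤ η^2*ℓ^2 := by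
    have e1 : 0 ≤ (1/3)*η*(3*Real.log 2 + ℓ - 2) :=
      mul_nonneg (by positivity) f1
    have e2 : 0 ≤ (η/2)*(1+3*Real.log 2+ℓ) := mul_nonneg (by positivity) f2
    rw [abs_of_nonneg (mul_nonneg e1 e2)]
    have c1 : (1/3)*η*(3*Real.log 2 + ℓ - 2) ≤ (1/3)*η*(2*ℓ) :=
      mul_le_mul_of_nonneg_left f1' (by positivity)
    have c2 : (η/2)*(1+3*Real.log 2+ℓ) ≤ (η/2)*(2*ℓ) :=
      mul_le_mul_of_nonneg_left f2' (by positivity)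
    have := mul_le_mul c1 c2 e2 (by positivity)
    nlinarith [this, q3]
  -- T' bounds
  have hT0 : 0 ≤ 2/3 + (1/3)*η*(3*Real.log 2 + ℓ - 2) := by nlinarith [hel, qel0]
  have hT1 : 2/3 + (1/3)*η*(3*Real.log 2 + ℓ - 2) ≤ 1 := by nlinarith [hel, qel]
  -- lower bound on D
  have hDlb : 1/2 ≤ D := by
    have hmod : 1 - η/2 - (η/2)*(3*Real.log 2 + ℓ) ≥ (8:ℝ)/10 := by nlinarith [hel, qel]
    have := abs_le.1 hDdiff
    linarith [this.1]
  have hD0 : (0:ℝ) < D := by linarith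
  set T' : ℝ := 2/3 + (1/3)*η*(3*Real.log 2 + ℓ - 2) with hT'
  have habs : |T'*D - G| ≤ (5/2)*(η^2*ℓ^2) := by
    have dec : T'*D - G = T'*(D - (1 - η/2 - (η/2)*(3*Real.log 2 + ℓ)))
        + (T'*(1 - η/2 - (η/2)*(3*Real.log 2 + ℓ)) - (2/3 - η))
        + ((2/3 - η) - G) := by ring
    have b1 : |T'*(D - (1 - η/2 - (η/2)*(3*Real.log 2 + ℓ)))| ≤ 3*η^2*ℓ := by
      rw [abs_mul, abs_of_nonneg hT0]
      calc T' * |D - (1 - η/2 - (η/2)*(3*Real.log 2 + ℓ))| ≤ 1 * (3*η^2*ℓ) :=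
            mul_le_mul hT1 hDdiff (abs_nonneg _) (by norm_num)
        _ = 3*η^2*ℓ := by ring
    have b2 : |T'*(1 - η/2 - (η/2)*(3*Real.log 2 + ℓ)) - (2/3 - η)| ≤ η^2*ℓ^2 := by
      have e : T'*(1 - η/2 - (η/2)*(3*Real.log 2 + ℓ)) - (2/3 - η)
          = -(((1/3)*η*(3*Real.log 2 + ℓ - 2))*((η/2)*(1+3*Real.log 2+ℓ))) := by
        rw [hT']; ring
      rw [e, abs_neg]
      exact hswb
    have b3 : |(2/3 - η) - G| ≤ 3*η^2*ℓ := by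
      rw [abs_sub_comm]; exact hGdiff
    calc |T'*D - G| ≤ |T'*(D - (1 - η/2 - (η/2)*(3*Real.log 2 + ℓ)))|
          + |T'*(1 - η/2 - (η/2)*(3*Real.log 2 + ℓ)) - (2/3 - η)|
          + |(2/3 - η) - G| := by
          rw [dec]; exact (abs_add_three _ _ _)
      _ ≤ 3*η^2*ℓ + η^2*ℓ^2 + 3*η^2*ℓ := by linarith
      _ ≤ (5/2)*(η^2*ℓ^2) := by linarith [q5]
  refine ⟨hDlb, ?_⟩
  have hratio : (D - G)/D - (1/3 - (1/3)*η*(Real.log 8 - Real.log η - 2)) = (T'*D - G)/D := by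
    rw [hlog8, hlη, hT']
    field_simp
    ring
  rw [hratio, abs_div, abs_of_pos hD0]
  calc |T'*D - G|/D ≤ ((5/2)*(η^2*ℓ^2))/(1/2) := by
        apply div_le_div₀ (by positivity) habs (by norm_num) hDlb
    _ = 5*η^2*ℓ^2 := by ring

set_option maxHeartbeats 1000000 in
theorem stmt10 (c : ℝ) (hc : 0 < c) :
    ∃ C > 0, ∃ η₀ > 0, ∀ η : ℝ, 0 < η → η < η₀ →
      |mu2 c (c * (1 - η)) -
          c^2 * (1/3 - (1/3) * η * Real.log (8 / (η * Real.exp 1 ^ 2)))|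
        ≤ C * η^2 * (Real.log (1/η))^2 := by
  refine ⟨5*c^2, by positivity, 1/100, by norm_num, fun η h0 h1 => ?_⟩
  obtain ⟨k, hk⟩ : ∃ k : ℝ, k = 1 - η := ⟨1 - η, rfl⟩
  have hk0 : 0 < k := by rw [hk]; linarith
  have hk1 : k < 1 := by rw [hk]; linarith
  have hc2 : (c:ℝ)^2 ≠ 0 := by positivity
  -- scaling
  have hptD : ∀ t : ℝ, Real.sqrt (((c*k)^2 - (c*t)^2)/(c^2 - (c*t)^2))
      = Real.sqrt ((k^2-t^2)/(1-t^2)) := by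
    intro t
    congr 1
    rw [show (c*k)^2-(c*t)^2 = c^2*(k^2-t^2) by ring,
      show c^2-(c*t)^2 = c^2*(1-t^2) by ring, mul_div_mul_left _ _ hc2]
  have sc1 : (∫ y in (0:ℝ)..(c*k), Real.sqrt (((c*k)^2 - y^2)/(c^2 - y^2)))
      = c * ∫ t in (0:ℝ)..k, Real.sqrt ((k^2-t^2)/(1-t^2)) := by
    have e0 : (0:ℝ) = c * 0 := by ring
    rw [show (∫ y in (0:ℝ)..(c*k), Real.sqrt (((c*k)^2 - y^2)/(c^2 - y^2)))
        = ∫ y in (c*0)..(c*k), Real.sqrt (((c*k)^2 - y^2)/(c^2 - y^2)) by rw [← e0]]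
    rw [← intervalIntegral.smul_integral_comp_mul_left
      (fun y => Real.sqrt (((c*k)^2 - y^2)/(c^2 - y^2))) c]
    rw [smul_eq_mul]
    congr 1
    apply intervalIntegral.integral_congr
    intro t _
    exact hptD t
  have sc2 : (∫ y in (0:ℝ)..(c*k), y^2 * Real.sqrt (((c*k)^2 - y^2)/(c^2 - y^2)))
      = c * (c^2 * ∫ t in (0:ℝ)..k, t^2 * Real.sqrt ((k^2-t^2)/(1-t^2))) := by
    have e0 : (0:ℝ) = c * 0 := by ring
    rw [show (∫ y in (0:ℝ)..(c*k), y^2 * Real.sqrt (((c*k)^2 - y^2)/(c^2 - y^2)))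
        = ∫ y in (c*0)..(c*k), y^2 * Real.sqrt (((c*k)^2 - y^2)/(c^2 - y^2)) by rw [← e0]]
    rw [← intervalIntegral.smul_integral_comp_mul_left
      (fun y => y^2 * Real.sqrt (((c*k)^2 - y^2)/(c^2 - y^2))) c]
    rw [smul_eq_mul]
    congr 1
    rw [← intervalIntegral.integral_const_mul]
    apply intervalIntegral.integral_congr
    intro t _
    simp only
    rw [hptD t]
    ring
  -- integral values
  obtain ⟨EJ, EG, hJ0, hJ1, hG0, hG1, hDval, hNval⟩ := integrals k hk0 hk1
  have hkη : (1:ℝ) - k = η := by rw [hk]; ring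
  rw [hkη] at hJ1 hG1 hDval
  obtain ⟨D, hDdef⟩ : ∃ D : ℝ, D = ∫ t in (0:ℝ)..k, Real.sqrt ((k^2-t^2)/(1-t^2)) :=
    ⟨_, rfl⟩
  obtain ⟨G, hGdef⟩ : ∃ G : ℝ, G = (k - k^3/3) - (1-k^2)*k/2 - (1-k^2)*EG := ⟨_, rfl⟩
  rw [← hDdef] at hDval hNval sc1
  rw [← hGdef] at hNval
  have main := endgame η EJ EG D G h0 h1 (by rw [hDval, hk]) (by rw [hGdef, hk])
    hJ0 (by rw [hk] at hJ1; exact hJ1) hG0 (by rw [hk] at hG1; exact hG1)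
  obtain ⟨hDlb, hbound⟩ := main
  have hD0 : D ≠ 0 := by linarith
  -- mu2 value
  have hmu : mu2 c (c * (1 - η)) = c^2 * ((D - G)/D) := by
    rw [mu2, ← hk, sc2, sc1, hNval]
    field_simp
  -- log identity
  have hloge : Real.log (8 / (η * Real.exp 1 ^ 2)) = Real.log 8 - Real.log η - 2 := by
    rw [Real.log_div (by norm_num) (by positivity),
      Real.log_mul h0.ne' (by positivity),
      show Real.exp 1 ^ 2 = Real.exp 2 by rw [← Real.exp_nat_mul]; norm_num,
      Real.log_exp]
    ring
  rw [hmu, hloge]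
  have e : c^2 * ((D - G)/D) - c^2 * (1/3 - 1/3*η*(Real.log 8 - Real.log η - 2))
      = c^2 * ((D - G)/D - (1/3 - (1/3)*η*(Real.log 8 - Real.log η - 2))) := by ring
  rw [e, abs_mul, abs_of_pos (by positivity : (0:ℝ) < c^2)]
  calc c^2 * |(D - G)/D - (1/3 - (1/3)*η*(Real.log 8 - Real.log η - 2))|
      ≤ c^2 * (5*η^2*(Real.log (1/η))^2) := by
        apply mul_le_mul_of_nonneg_left hbound (by positivity)
    _ = 5*c^2*η^2*(Real.log (1/η))^2 := by ring
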